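/- Let H be the symmetry group (of order 2p) of a regular p-gon P centered at O in ℝ², and let F₁, ..., F_m be points in ℝ² with the set G = {f(F_i) : f ∈ H, 1 ≤ i ≤ m} not all equal to O. If F₀(X) = Σ_{f ∈ H} Σ_{F_i ≠ O} ‖X - f(F_i)‖, then Σ_{f ∈ H} Σ_{F_i ≠ O} (f(F_i) - O)/‖f(F_i) - O‖ = 0, i.e., the center O satisfies the Weissfeld stationarity condition, hence O minimizes F₀. -/

import Mathlib

open scoped Classical Real

/-- The rotation part of the dihedral symmetry group of the regular `p`-gon centered at `0`,
    modeled in the plane `ℂ`: rotation by angle `2πk/p`. -/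
noncomputable def dihedralRot (p k : ℕ) (z : ℂ) : ℂ :=
  Complex.exp (2 * π * Complex.I * k / p) * z

/-- The reflection elements of the dihedral symmetry group of the regular `p`-gon
    centered at `0`: rotation by `2πk/p` composed with conjugation. -/
noncomputable def dihedralRefl (p k : ℕ) (z : ℂ) : ℂ :=
  Complex.exp (2 * π * Complex.I * k / p) * (starRingEnd ℂ z)

/-- Weiszfeld-type lower bound: the distance to a nonzero point `a` is bounded below
    by `‖a‖` minus the component of `X` in the direction of `a`. -/
lemma weiszfeld_lower (X a : ℂ) (ha : a ≠ 0) :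
    ‖a‖ - ‖a‖⁻¹ * (inner ℝ X a : ℝ) ≤ ‖X - a‖ := by
  have h1 : (inner ℝ (a - X) a : ℝ) ≤ ‖a - X‖ * ‖a‖ := real_inner_le_norm _ _
  rw [inner_sub_left, real_inner_self_eq_norm_sq, norm_sub_rev] at h1
  have hn : (0:ℝ) < ‖a‖ := norm_pos_iff.mpr ha
  rw [sub_le_iff_le_add, ← mul_le_mul_iff_of_pos_right hn]
  have hinv : ‖a‖⁻¹ * ‖a‖ = 1 := inv_mul_cancel₀ hn.ne'
  calc ‖a‖ * ‖a‖ = ‖a‖^2 := by ring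
    _ ≤ ‖X - a‖ * ‖a‖ + inner ℝ X a := by linarith
    _ ≤ (‖X - a‖ + ‖a‖⁻¹ * inner ℝ X a) * ‖a‖ := by
        rw [add_mul, mul_comm (‖a‖⁻¹ * (inner ℝ X a : ℝ)) ‖a‖, ← mul_assoc,
          mul_comm ‖a‖ ‖a‖⁻¹, hinv, one_mul]

theorem dihedral_symmetrized_center_minimizes (p m : ℕ) (hp : 3 ≤ p)
    (F : Fin m → ℂ) (hG : ∃ i, F i ≠ 0) :
    (∑ k ∈ Finset.range p, ∑ i ∈ Finset.univ.filter (fun i => F i ≠ 0),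
        ((‖dihedralRot p k (F i)‖⁻¹ : ℝ) • (dihedralRot p k (F i) - 0) +
         (‖dihedralRefl p k (F i)‖⁻¹ : ℝ) • (dihedralRefl p k (F i) - 0))) = 0 ∧
    IsMinOn (fun X : ℂ => ∑ k ∈ Finset.range p, ∑ i ∈ Finset.univ.filter (fun i => F i ≠ 0),
        (‖X - dihedralRot p k (F i)‖ + ‖X - dihedralRefl p k (F i)‖)) Set.univ 0 := by
  have hunit : ∀ k : ℕ, ‖Complex.exp (2 * π * Complex.I * k / p)‖ = 1 := by
    intro k
    rw [Complex.norm_exp]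
    norm_num [Complex.div_re, Complex.mul_re, Complex.mul_im]
  have hrotnorm : ∀ (k : ℕ) (z : ℂ), ‖dihedralRot p k z‖ = ‖z‖ := by
    intro k z; rw [dihedralRot, norm_mul, hunit, one_mul]
  have hreflnorm : ∀ (k : ℕ) (z : ℂ), ‖dihedralRefl p k z‖ = ‖z‖ := by
    intro k z; rw [dihedralRefl, norm_mul, hunit, one_mul, RCLike.norm_conj]
  have hrotne : ∀ (k : ℕ) (z : ℂ), z ≠ 0 → dihedralRot p k z ≠ 0 := by
    intro k z hz
    exact mul_ne_zero (Complex.exp_ne_zero _) hz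
  have hreflne : ∀ (k : ℕ) (z : ℂ), z ≠ 0 → dihedralRefl p k z ≠ 0 := by
    intro k z hz
    exact mul_ne_zero (Complex.exp_ne_zero _) (by simpa using hz)
  have hsum0 : ∑ k ∈ Finset.range p, Complex.exp (2 * π * Complex.I * k / p) = 0 := by
    have h := Complex.isPrimitiveRoot_exp p (by omega)
    have h2 := h.geom_sum_eq_zero (by omega)
    rw [← h2]
    refine Finset.sum_congr rfl fun k _ => ?_
    rw [← Complex.exp_nat_mul]
    ring_nf
  -- the stationarity sum
  set C : ℂ := ∑ i ∈ Finset.univ.filter (fun i => F i ≠ 0),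
      ((‖F i‖⁻¹ : ℝ) : ℂ) * (F i + starRingEnd ℂ (F i)) with hC
  have hzero : (∑ k ∈ Finset.range p, ∑ i ∈ Finset.univ.filter (fun i => F i ≠ 0),
      ((‖dihedralRot p k (F i)‖⁻¹ : ℝ) • (dihedralRot p k (F i) - 0) +
       (‖dihedralRefl p k (F i)‖⁻¹ : ℝ) • (dihedralRefl p k (F i) - 0))) = 0 := by
    have step : ∀ k ∈ Finset.range p,
        (∑ i ∈ Finset.univ.filter (fun i => F i ≠ 0),
          ((‖dihedralRot p k (F i)‖⁻¹ : ℝ) • (dihedralRot p k (F i) - 0) +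
           (‖dihedralRefl p k (F i)‖⁻¹ : ℝ) • (dihedralRefl p k (F i) - 0)))
        = Complex.exp (2 * π * Complex.I * k / p) * C := by
      intro k _
      rw [hC, Finset.mul_sum]
      refine Finset.sum_congr rfl fun i _ => ?_
      rw [hrotnorm, hreflnorm, sub_zero, sub_zero, dihedralRot, dihedralRefl,
        Complex.real_smul, Complex.real_smul]
      ring
    rw [Finset.sum_congr rfl step, ← Finset.sum_mul, hsum0, zero_mul]
  refine ⟨hzero, ?_⟩
  rw [isMinOn_iff]
  intro X _
  -- value at 0
  have hval0 : (∑ k ∈ Finset.range p, ∑ i ∈ Finset.univ.filter (fun i => F i ≠ 0),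
      (‖(0:ℂ) - dihedralRot p k (F i)‖ + ‖(0:ℂ) - dihedralRefl p k (F i)‖))
      = ∑ k ∈ Finset.range p, ∑ i ∈ Finset.univ.filter (fun i => F i ≠ 0),
      (‖dihedralRot p k (F i)‖ + ‖dihedralRefl p k (F i)‖) := by
    simp [norm_sub_rev]
  rw [hval0]
  -- the correction term vanishes
  have hcorr : (∑ k ∈ Finset.range p, ∑ i ∈ Finset.univ.filter (fun i => F i ≠ 0),
      (‖dihedralRot p k (F i)‖⁻¹ * (inner ℝ X (dihedralRot p k (F i)) : ℝ) +
       ‖dihedralRefl p k (F i)‖⁻¹ * (inner ℝ X (dihedralRefl p k (F i)) : ℝ))) = 0 := by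
    have := congrArg (fun z : ℂ => (inner ℝ X z : ℝ)) hzero
    simp only [inner_sum, inner_add_right, real_inner_smul_right, sub_zero,
      inner_zero_right] at this
    exact this
  have hbound : ∀ k ∈ Finset.range p, ∀ i ∈ Finset.univ.filter (fun i => F i ≠ 0),
      (‖dihedralRot p k (F i)‖ - ‖dihedralRot p k (F i)‖⁻¹ * (inner ℝ X (dihedralRot p k (F i)) : ℝ)) +
      (‖dihedralRefl p k (F i)‖ - ‖dihedralRefl p k (F i)‖⁻¹ * (inner ℝ X (dihedralRefl p k (F i)) : ℝ))
      ≤ ‖X - dihedralRot p k (F i)‖ + ‖X - dihedralRefl p k (F i)‖ := by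
    intro k _ i hi
    have hFi : F i ≠ 0 := (Finset.mem_filter.mp hi).2
    exact add_le_add (weiszfeld_lower X _ (hrotne k _ hFi)) (weiszfeld_lower X _ (hreflne k _ hFi))
  calc (∑ k ∈ Finset.range p, ∑ i ∈ Finset.univ.filter (fun i => F i ≠ 0),
        (‖dihedralRot p k (F i)‖ + ‖dihedralRefl p k (F i)‖))
      = ∑ k ∈ Finset.range p, ∑ i ∈ Finset.univ.filter (fun i => F i ≠ 0),
        ((‖dihedralRot p k (F i)‖ - ‖dihedralRot p k (F i)‖⁻¹ * (inner ℝ X (dihedralRot p k (F i)) : ℝ)) +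
         (‖dihedralRefl p k (F i)‖ - ‖dihedralRefl p k (F i)‖⁻¹ * (inner ℝ X (dihedralRefl p k (F i)) : ℝ))) := by
        rw [eq_comm]
        have : ∀ f g : ℕ → Fin m → ℝ, True := fun _ _ => trivial
        rw [← sub_eq_zero]
        rw [← Finset.sum_sub_distrib]
        simp_rw [← Finset.sum_sub_distrib]
        convert neg_eq_zero.mpr hcorr using 1
        rw [← Finset.sum_neg_distrib]
        refine Finset.sum_congr rfl fun k _ => ?_
        rw [← Finset.sum_neg_distrib]
        refine Finset.sum_congr rfl fun i _ => ?_
        ring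
    _ ≤ ∑ k ∈ Finset.range p, ∑ i ∈ Finset.univ.filter (fun i => F i ≠ 0),
        (‖X - dihedralRot p k (F i)‖ + ‖X - dihedralRefl p k (F i)‖) := by
        refine Finset.sum_le_sum fun k hk => Finset.sum_le_sum fun i hi => hbound k hk i hi
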